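/- Let B ∈ ℝ^{d×n} be a real matrix and define T = I - Bᵀ(I + BBᵀ)⁻¹B on ℝⁿ. Then Bᵀ(I + BBᵀ)B acted on by T on both sides satisfies T Bᵀ(I + BBᵀ) B T = Bᵀ(I + BBᵀ)⁻¹ B. Equivalently, (I - Bᵀ(I+BBᵀ)⁻¹B) Bᵀ (I+BBᵀ) B (I - Bᵀ(I+BBᵀ)⁻¹B) = Bᵀ(I+BBᵀ)⁻¹B. -/
import Mathlib

theorem key_algebraic_identity {d n : ℕ} (B : Matrix (Fin d) (Fin n) ℝ) :
    (1 - B.transpose * (1 + B * B.transpose)⁻¹ * B) *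
        (B.transpose * (1 + B * B.transpose) * B) *
        (1 - B.transpose * (1 + B * B.transpose)⁻¹ * B) =
      B.transpose * (1 + B * B.transpose)⁻¹ * B := by
  set A := B * B.transpose with hA
  have hpd : (1 + A).PosDef := by
    have hps : A.PosSemidef := by
      simpa [Matrix.conjTranspose_eq_transpose_of_trivial] using
        Matrix.posSemidef_self_mul_conjTranspose B
    exact Matrix.PosDef.add_posSemidef Matrix.PosDef.one hps
  have hu : IsUnit (1 + A).det := hpd.det_pos.ne'.isUnit
  set S := (1 + A)⁻¹ with hS
  have h1 : S * (1 + A) = 1 := Matrix.nonsing_inv_mul _ hu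
  have h2 : (1 + A) * S = 1 := Matrix.mul_nonsing_inv _ hu
  have hSA : S * A = 1 - S := by
    have h := h1
    rw [mul_add, mul_one] at h
    exact eq_sub_of_add_eq' h
  have hAS : A * S = 1 - S := by
    have h := h2
    rw [add_mul, one_mul] at h
    exact eq_sub_of_add_eq' h
  set X := B.transpose * S * B with hX
  have hL : (1 - X) * B.transpose = B.transpose * S := by
    have e : X * B.transpose = B.transpose * (S * A) := by
      rw [hX, hA]; simp only [Matrix.mul_assoc]
    rw [Matrix.sub_mul, Matrix.one_mul, e, hSA, Matrix.mul_sub, Matrix.mul_one, sub_sub_cancel]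
  have hR : B * (1 - X) = S * B := by
    have e : B * X = (A * S) * B := by
      rw [hX, hA]; simp only [Matrix.mul_assoc]
    rw [Matrix.mul_sub, Matrix.mul_one, e, hAS, Matrix.sub_mul, Matrix.one_mul, sub_sub_cancel]
  calc (1 - X) * (B.transpose * (1 + A) * B) * (1 - X)
      = ((1 - X) * B.transpose) * (1 + A) * (B * (1 - X)) := by simp only [Matrix.mul_assoc]
    _ = (B.transpose * S) * (1 + A) * (S * B) := by rw [hL, hR]
    _ = B.transpose * (S * (1 + A)) * (S * B) := by simp only [Matrix.mul_assoc]
    _ = B.transpose * S * B := by rw [h1, Matrix.mul_one, ← Matrix.mul_assoc]
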